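/- Let H be a hb-graph on Fin n with hb-edges e_1, …, e_p of m-cardinalities ρ_k satisfying 1 ≤ ρ_k ≤ r, where r ≥ 2 is the m-range of H, and let A_sil be the e-adjacency hypermatrix of its silo-uniformized hb-graph. Then for every original vertex j : Fin n, Σ_{t : t(0) = j} A_sil(t) = deg_m(j) = Σ_k e_k(j); that is, the m-degree of every original vertex is retrieved as the sum of the entries of A_sil over all tuples whose first coordinate is that vertex. -/

import Mathlib

open Finset

section aux
variable {V : Type*} [DecidableEq V] [Fintype V]

def cnt {m : ℕ} (t : Fin m → V) (v : V) : ℕ :=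
  (Finset.univ.filter (fun s => t s = v)).card

lemma cnt_cons {m : ℕ} (a : V) (t : Fin m → V) (v : V) :
    cnt (Fin.cons a t) v = (if a = v then 1 else 0) + cnt t v := by
  unfold cnt
  rw [Finset.card_filter, Finset.card_filter, Fin.sum_univ_succ]
  simp only [Fin.cons_zero, Fin.cons_succ]

open Classical in
lemma fiber_eq {m : ℕ} (f : V → ℕ) (v0 : V) (h : 0 < f v0) :
    (Finset.univ.filter
      (fun t : Fin (m+1) → V => (∀ v, cnt t v = f v) ∧ t 0 = v0)).card
    = (Finset.univ.filter (fun t' : Fin m → V =>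
        ∀ v, cnt t' v = Function.update f v0 (f v0 - 1) v)).card := by
  refine Finset.card_bij' (fun t _ => Fin.tail t) (fun t' _ => Fin.cons v0 t')
    ?hi ?hj ?li ?ri
  case hi =>
    intro t ht
    simp only [Finset.mem_filter, Finset.mem_univ, true_and] at ht ⊢
    obtain ⟨hc, h0⟩ := ht
    intro v
    have key := cnt_cons (t 0) (Fin.tail t) v
    rw [Fin.cons_self_tail] at key
    rw [hc v, h0] at key
    rcases eq_or_ne v v0 with rfl | hv
    · rw [Function.update_self]
      rw [if_pos rfl] at key
      omega
    · rw [Function.update_of_ne hv]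
      rw [if_neg (Ne.symm hv)] at key
      omega
  case hj =>
    intro t' ht'
    simp only [Finset.mem_filter, Finset.mem_univ, true_and] at ht' ⊢
    refine ⟨fun v => ?_, Fin.cons_zero _ _⟩
    rw [cnt_cons, ht' v]
    rcases eq_or_ne v v0 with rfl | hv
    · rw [Function.update_self, if_pos rfl]
      omega
    · rw [Function.update_of_ne hv, if_neg (Ne.symm hv)]
      omega
  case li =>
    intro t ht
    simp only [Finset.mem_filter, Finset.mem_univ, true_and] at ht
    show Fin.cons v0 (Fin.tail t) = t
    have key := Fin.cons_self_tail t
    rw [ht.2] at key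
    exact key
  case ri =>
    intro t' _
    exact Fin.tail_cons _ _

open Classical in
lemma fiber_empty {m : ℕ} (f : V → ℕ) (v0 : V) (h : f v0 = 0) :
    (Finset.univ.filter
      (fun t : Fin (m+1) → V => (∀ v, cnt t v = f v) ∧ t 0 = v0)).card = 0 := by
  rw [Finset.card_eq_zero, Finset.filter_eq_empty_iff]
  rintro t - ⟨hc, h0⟩
  have h1 : 0 < cnt t v0 := by
    rw [cnt, Finset.card_pos]
    exact ⟨0, by simp [h0]⟩
  have h2 := hc v0
  omega

lemma sum_update_pred (f : V → ℕ) (v0 : V) (h : 0 < f v0) :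
    ∑ v, Function.update f v0 (f v0 - 1) v = (∑ v, f v) - 1 := by
  rw [Finset.sum_update_of_mem (Finset.mem_univ v0), Finset.sdiff_singleton_eq_erase]
  rw [← Finset.add_sum_erase _ f (Finset.mem_univ v0)]
  omega

lemma prod_fact_update (f : V → ℕ) (v0 : V) (h : 0 < f v0) :
    ∏ v, (f v).factorial
      = f v0 * ∏ v, (Function.update f v0 (f v0 - 1) v).factorial := by
  simp_rw [Function.apply_update (fun _ n => n.factorial) f v0 (f v0 - 1)]
  rw [Finset.prod_update_of_mem (Finset.mem_univ v0), Finset.sdiff_singleton_eq_erase,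
      ← Finset.mul_prod_erase _ (fun v => (f v).factorial) (Finset.mem_univ v0),
      ← mul_assoc, Nat.mul_factorial_pred h.ne']

open Classical in
lemma realize_card_mul (m : ℕ) (f : V → ℕ) (hf : ∑ v, f v = m) :
    (Finset.univ.filter (fun t : Fin m → V => ∀ v, cnt t v = f v)).card *
      ∏ v, (f v).factorial = m.factorial := by
  induction m generalizing f with
  | zero =>
    have hz : ∀ v, f v = 0 := fun v => Finset.sum_eq_zero_iff.mp hf v (Finset.mem_univ v)
    have h1 : (Finset.univ.filter (fun t : Fin 0 → V => ∀ v, cnt t v = f v))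
        = Finset.univ := by
      rw [Finset.filter_eq_self]
      intro t _ v
      rw [hz v, cnt]
      simp
    rw [h1]
    simp [hz, Finset.card_univ]
  | succ m ih =>
    have hpart : (Finset.univ.filter (fun t : Fin (m+1) → V => ∀ v, cnt t v = f v)).card
        = ∑ v0 : V, (Finset.univ.filter
            (fun t : Fin (m+1) → V => (∀ v, cnt t v = f v) ∧ t 0 = v0)).card := by
      rw [Finset.card_eq_sum_card_fiberwise
        (f := fun t : Fin (m+1) → V => t 0) (t := Finset.univ)
        (fun _ _ => Finset.mem_univ _)]
      simp_rw [Finset.filter_filter]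
    rw [hpart, Finset.sum_mul]
    have hterm : ∀ v0 : V, (Finset.univ.filter
          (fun t : Fin (m+1) → V => (∀ v, cnt t v = f v) ∧ t 0 = v0)).card *
          ∏ v, (f v).factorial = f v0 * m.factorial := by
      intro v0
      rcases Nat.eq_zero_or_pos (f v0) with hz | hp
      · rw [fiber_empty f v0 hz, hz]
        ring
      · have hsum : ∑ v, Function.update f v0 (f v0 - 1) v = m := by
          rw [sum_update_pred f v0 hp, hf]
          exact Nat.succ_sub_one m
        have hih := ih (Function.update f v0 (f v0 - 1)) hsum
        rw [fiber_eq f v0 hp, prod_fact_update f v0 hp, ← hih]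
        ring
    rw [Finset.sum_congr rfl (fun v0 _ => hterm v0), ← Finset.sum_mul, hf,
        Nat.factorial_succ]

open Classical in
lemma fiber_mul' {r : ℕ} (f : V → ℕ) (hf : ∑ v, f v = r) (h0 : Fin r)
    (hh : (h0 : ℕ) = 0) (v0 : V) :
    (Finset.univ.filter (fun t : Fin r → V => (∀ v, cnt t v = f v) ∧ t h0 = v0)).card *
      ∏ v, (f v).factorial = f v0 * (r - 1).factorial := by
  obtain ⟨m, rfl⟩ : ∃ m, r = m + 1 := ⟨r - 1, by have := h0.pos; omega⟩
  have he : h0 = 0 := Fin.ext (by simpa using hh)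
  subst he
  rcases Nat.eq_zero_or_pos (f v0) with hz | hp
  · rw [fiber_empty f v0 hz, hz]
    simp
  · have hsum : ∑ v, Function.update f v0 (f v0 - 1) v = m := by
      rw [sum_update_pred f v0 hp, hf]
      exact Nat.succ_sub_one m
    have hih := realize_card_mul m (Function.update f v0 (f v0 - 1)) hsum
    have hmm : (m + 1 - 1).factorial = m.factorial := by norm_num
    rw [fiber_eq f v0 hp, prod_fact_update f v0 hp, hmm, ← hih]
    ring

end aux

/-- The hb-edges of the silo-uniformized hb-graph: the original multiplicities on
the original vertices `Sum.inl i`, and multiplicity `r − ρ_k` on the null vertex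
`N_s = Sum.inr s` (where `N_s` is labelled `(s : ℕ) + 1 ∈ {1, …, r−1}`) exactly
when the label equals the m-cardinality `ρ_k = Σ_j e_k(j)` of the hb-edge. -/
def siloEdge (n p r : ℕ) (e : Fin p → Fin n → ℕ) (k : Fin p) :
    Fin n ⊕ Fin (r - 1) → ℕ
  | Sum.inl i => e k i
  | Sum.inr s => if (s : ℕ) + 1 = ∑ j, e k j then r - ∑ j, e k j else 0

/-- The e-adjacency hypermatrix of the silo-uniformized hb-graph:
`A_sil(t) = Σ_k (∏_v ê_k(v)!)/(r−1)! · [t realizes ê_k]`. -/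
noncomputable def Asil (n p r : ℕ) (e : Fin p → Fin n → ℕ)
    (t : Fin r → Fin n ⊕ Fin (r - 1)) : ℝ :=
  ∑ k, if ∀ v, (Finset.univ.filter (fun s => t s = v)).card = siloEdge n p r e k v
       then ((∏ v, (siloEdge n p r e k v).factorial : ℕ) : ℝ) / (r - 1).factorial
       else 0

lemma silo_sum (n p r : ℕ) (e : Fin p → Fin n → ℕ) (k : Fin p)
    (h1 : 1 ≤ ∑ j, e k j) (h2 : ∑ j, e k j ≤ r) :
    ∑ v, siloEdge n p r e k v = r := by
  rw [Fintype.sum_sum_type]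
  have hA : ∑ i, siloEdge n p r e k (Sum.inl i) = ∑ j, e k j := rfl
  have hB : ∑ s : Fin (r-1), siloEdge n p r e k (Sum.inr s) = r - ∑ j, e k j := by
    show ∑ s : Fin (r-1),
        (if (s:ℕ)+1 = ∑ j, e k j then r - ∑ j, e k j else 0) = _
    rw [Fin.sum_univ_eq_sum_range
      (fun i => if i+1 = ∑ j, e k j then r - ∑ j, e k j else 0)]
    have hiff : ∀ i, (i+1 = ∑ j, e k j) = (i = (∑ j, e k j) - 1) := fun i => by
      apply propext; omega
    simp_rw [hiff]
    rw [Finset.sum_ite_eq' (Finset.range (r-1)) ((∑ j, e k j) - 1)]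
    simp only [Finset.mem_range]
    split_ifs with hcond
    · rfl
    · omega
  rw [hA, hB]
  omega

/-- For a hb-graph on `Fin n` with hb-edges of m-cardinalities `ρ_k` satisfying
`1 ≤ ρ_k ≤ r`, where `r ≥ 2` is the m-range, and for every original vertex `j`,
the sum of the entries of the silo e-adjacency hypermatrix over all tuples whose
first coordinate is `j` equals the m-degree `deg_m(j) = Σ_k e_k(j)`. -/
theorem stmt8 (n p r : ℕ) (hr : 2 ≤ r) (e : Fin p → Fin n → ℕ)
    (hlo : ∀ k, 1 ≤ ∑ j, e k j) (hub : ∀ k, ∑ j, e k j ≤ r)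
    (hrange : Finset.univ.sup (fun k : Fin p => ∑ j, e k j) = r)
    (j : Fin n) :
    ∑ t ∈ Finset.univ.filter
        (fun t : Fin r → Fin n ⊕ Fin (r - 1) => t ⟨0, by omega⟩ = Sum.inl j),
      Asil n p r e t = ∑ k, (e k j : ℝ) := by
  classical
  have hrpos : 0 < r := by omega
  have hfac : (((r-1).factorial : ℕ) : ℝ) ≠ 0 :=
    Nat.cast_ne_zero.mpr (Nat.factorial_ne_zero _)
  unfold Asil
  rw [Finset.sum_comm]
  refine Finset.sum_congr rfl fun k _ => ?_
  rw [← Finset.sum_filter, Finset.filter_filter, Finset.sum_const, nsmul_eq_mul]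
  have hsilo : ∑ v, siloEdge n p r e k v = r := silo_sum n p r e k (hlo k) (hub k)
  have hcard := fiber_mul' (siloEdge n p r e k) hsilo ⟨0, hrpos⟩ rfl (Sum.inl j)
  have hset : (Finset.univ.filter (fun t : Fin r → Fin n ⊕ Fin (r-1) =>
        t ⟨0, hrpos⟩ = Sum.inl j ∧
        ∀ v, (Finset.univ.filter (fun s => t s = v)).card = siloEdge n p r e k v))
      = Finset.univ.filter (fun t : Fin r → Fin n ⊕ Fin (r-1) =>
        (∀ v, cnt t v = siloEdge n p r e k v) ∧ t ⟨0, hrpos⟩ = Sum.inl j) := by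
    apply Finset.filter_congr
    intro t _
    exact and_comm
  rw [hset, ← mul_div_assoc, div_eq_iff hfac]
  have hj' : siloEdge n p r e k (Sum.inl j) = e k j := rfl
  rw [hj'] at hcard
  exact_mod_cast hcard
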